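/- arXiv:1310.6152 — 2 statements merged into one kernel-verified Lean document; each statement's English description precedes it below -/
import Mathlib

section
/- Let G be a connected graph that is the union of three connected subgraphs G_1, G_2, G_3, each with at least 2 vertices, which pairwise intersect exactly in a single common vertex v_0. Let X be the Perron eigenvector of the distance matrix of G, and set S_1 = Σ_{v∈V(G_1)} x_v and S_2 = Σ_{v∈V(G_2)} x_v. For a vertex v_a ∈ V(G_2) with v_a ≠ v_0, let H be the graph obtained from G by detaching G_3 from v_0 and reattaching it at v_a (i.e., deleting all edges from v_0 to its neighbors in G_3 and adding edges from v_a to those same vertices). If S_1 ≥ S_2, then ϱ(H) > ϱ(G). -/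
open SimpleGraph

/-- The distance matrix of a graph: the (i,j)-entry is the graph distance between i and j. -/
noncomputable def distMatrix {V : Type*} [Fintype V] (G : SimpleGraph V) : Matrix V V ℝ :=
  fun i j => (G.dist i j : ℝ)

/-- The distance spectral radius: the largest eigenvalue of the distance matrix. -/
noncomputable def distSpectralRadius {V : Type*} [Fintype V] (G : SimpleGraph V) : ℝ :=
  sSup {μ : ℝ | ∃ X : V → ℝ, X ≠ 0 ∧ (distMatrix G).mulVec X = μ • X}

/-- The distance Perron vector: the positive unit eigenvector of the distance matrix
corresponding to the distance spectral radius. -/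
def IsDistPerronVector {V : Type*} [Fintype V] (G : SimpleGraph V) (X : V → ℝ) : Prop :=
  (∀ v, 0 < X v) ∧ (∑ v, (X v) ^ 2 = 1) ∧
    (distMatrix G).mulVec X = distSpectralRadius G • X

/-- The graph `H` obtained from `G` by detaching the branch `G₃` from `v₀` and reattaching
it at `vₐ`: all edges from `v₀` to its neighbors in `G₃` are deleted and replaced by edges
from `vₐ` to those same vertices. -/
def reattach {V : Type*} (G : SimpleGraph V) (H₃ : G.Subgraph) (v₀ va : V) :
    SimpleGraph V :=
  SimpleGraph.fromRel (fun a b =>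
    (G.Adj a b ∧
      ¬((a = v₀ ∧ b ∈ H₃.neighborSet v₀) ∨ (b = v₀ ∧ a ∈ H₃.neighborSet v₀))) ∨
    (a = va ∧ b ∈ H₃.neighborSet v₀))

-- Auxiliary lemmas

open Finset RealInnerProductSpace in
lemma rayleigh_le_sSup {V : Type*} [Fintype V] (A : Matrix V V ℝ) (hA : A.IsHermitian)
    (X : V → ℝ) (hX : ∑ v, X v ^ 2 = 1) :
    ∑ v, X v * A.mulVec X v ≤
      sSup {μ : ℝ | ∃ Y : V → ℝ, Y ≠ 0 ∧ A.mulVec Y = μ • Y} := by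
  classical
  have hVne : Nonempty V := by
    by_contra h
    rw [not_nonempty_iff] at h
    simp at hX
  set S := {μ : ℝ | ∃ Y : V → ℝ, Y ≠ 0 ∧ A.mulVec Y = μ • Y} with hS
  have hsym : ∀ i j, A i j = A j i := by
    intro i j
    conv_lhs => rw [← hA]
    simp [Matrix.conjTranspose_apply]
  -- bounded above
  have hbdd : BddAbove S := by
    refine ⟨∑ v, ∑ w, |A v w|, ?_⟩
    rintro μ ⟨Y, hY0, hY⟩
    obtain ⟨v, -, hv⟩ := Finset.exists_max_image Finset.univ (fun v => |Y v|) ⟨Classical.arbitrary V, Finset.mem_univ _⟩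
    have hvpos : 0 < |Y v| := by
      rcases lt_or_eq_of_le (abs_nonneg (Y v)) with h | h
      · exact h
      · exfalso; apply hY0; funext w
        have := hv w (Finset.mem_univ w)
        rw [← h] at this
        simpa using le_antisymm this (abs_nonneg _)
    have h1 : |μ| * |Y v| ≤ (∑ w, |A v w|) * |Y v| := by
      have : μ * Y v = ∑ w, A v w * Y w := by
        have h := congrFun hY v
        simp only [Matrix.mulVec, dotProduct, Pi.smul_apply, smul_eq_mul] at h
        exact h.symm
      calc |μ| * |Y v| = |μ * Y v| := (abs_mul _ _).symm
        _ = |∑ w, A v w * Y w| := by rw [this]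
        _ ≤ ∑ w, |A v w * Y w| := Finset.abs_sum_le_sum_abs _ _
        _ ≤ ∑ w, |A v w| * |Y v| := by
            refine Finset.sum_le_sum fun w _ => ?_
            rw [abs_mul]
            exact mul_le_mul_of_nonneg_left (hv w (Finset.mem_univ w)) (abs_nonneg _)
        _ = (∑ w, |A v w|) * |Y v| := by rw [Finset.sum_mul]
    have h2 : |μ| ≤ ∑ w, |A v w| := le_of_mul_le_mul_right h1 hvpos
    calc μ ≤ |μ| := le_abs_self μ
      _ ≤ ∑ w, |A v w| := h2
      _ ≤ ∑ u, ∑ w, |A u w| := Finset.single_le_sum (f := fun u => ∑ w, |A u w|) (fun u _ => Finset.sum_nonneg fun w _ => abs_nonneg _) (Finset.mem_univ v)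
  set b := hA.eigenvectorBasis with hb
  set lam := hA.eigenvalues with hlam
  set M := Finset.univ.sup' (Finset.univ_nonempty) lam with hM
  -- M ∈ S
  obtain ⟨j, -, hj⟩ := Finset.exists_mem_eq_sup' (Finset.univ_nonempty) lam
  have hMS : M ∈ S := by
    refine ⟨⇑(b j), ?_, ?_⟩
    · intro h
      exact b.toBasis.ne_zero j (by ext v; exact congrFun h v)
    · rw [hM, hj]
      exact hA.mulVec_eigenvectorBasis j
  -- Rayleigh bound
  have hXE : (∑ v, X v * A.mulVec X v) ≤ M := by
    set x : EuclideanSpace ℝ V := WithLp.toLp 2 X with hx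
    have hinner : ∀ y z : EuclideanSpace ℝ V, (inner ℝ y z : ℝ) = ∑ v, y v * z v := by
      intro y z; rw [PiLp.inner_apply]; simp [mul_comm]
    have hAselfadj : ∀ i : V, (inner ℝ (b i) (WithLp.toLp 2 (A.mulVec X) : EuclideanSpace ℝ V) : ℝ) = lam i * (inner ℝ (b i) x : ℝ) := by
      intro i
      rw [hinner, hinner]
      have expand : ∑ v, b i v * A.mulVec X v = ∑ w, A.mulVec (b i) w * X w := by
        simp only [Matrix.mulVec, dotProduct]
        calc ∑ v, b i v * ∑ w, A v w * X w
            = ∑ v, ∑ w, b i v * (A v w * X w) := by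
              refine Finset.sum_congr rfl fun v _ => ?_; rw [Finset.mul_sum]
          _ = ∑ w, ∑ v, b i v * (A v w * X w) := Finset.sum_comm
          _ = ∑ w, (∑ v, A w v * b i v) * X w := by
              refine Finset.sum_congr rfl fun w _ => ?_
              rw [Finset.sum_mul]
              refine Finset.sum_congr rfl fun v _ => ?_
              rw [hsym w v]; ring
      rw [expand]
      have hmv : A.mulVec ⇑(b i) = lam i • (fun w => b i w) := hA.mulVec_eigenvectorBasis i
      rw [hmv]
      simp [Finset.mul_sum, mul_assoc, hx]
    have hparseval : ∑ i, (inner ℝ (b i) x : ℝ) ^ 2 = 1 := by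
      have := b.sum_inner_mul_inner x x
      rw [hinner] at this
      have hxx : ∑ v, x v * x v = 1 := by rw [← hX]; congr 1; ext v; ring
      calc ∑ i, (inner ℝ (b i) x : ℝ) ^ 2
          = ∑ i, (inner ℝ x (b i) : ℝ) * (inner ℝ (b i) x : ℝ) := by
            refine Finset.sum_congr rfl fun i _ => ?_
            rw [real_inner_comm]; ring
        _ = 1 := by rw [this, hxx]
    have hexpand : ∑ v, X v * A.mulVec X v = ∑ i, lam i * (inner ℝ (b i) x : ℝ) ^ 2 := by
      have := b.sum_inner_mul_inner x (WithLp.toLp 2 (A.mulVec X) : EuclideanSpace ℝ V)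
      rw [hinner x] at this
      calc ∑ v, X v * A.mulVec X v = (inner ℝ x (WithLp.toLp 2 (A.mulVec X) : EuclideanSpace ℝ V) : ℝ) := by
            rw [hinner]
        _ = ∑ i, (inner ℝ x (b i) : ℝ) * (inner ℝ (b i) (WithLp.toLp 2 (A.mulVec X) : EuclideanSpace ℝ V) : ℝ) := by rw [hinner]; exact this.symm
        _ = ∑ i, lam i * (inner ℝ (b i) x : ℝ) ^ 2 := by
            refine Finset.sum_congr rfl fun i _ => ?_
            rw [hAselfadj i, real_inner_comm x]
            ring
    rw [hexpand]
    calc ∑ i, lam i * (inner ℝ (b i) x : ℝ) ^ 2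
        ≤ ∑ i, M * (inner ℝ (b i) x : ℝ) ^ 2 := by
          refine Finset.sum_le_sum fun i _ => ?_
          exact mul_le_mul_of_nonneg_right (Finset.le_sup' lam (Finset.mem_univ i)) (sq_nonneg _)
      _ = M := by rw [← Finset.mul_sum, hparseval, mul_one]
  exact hXE.trans (le_csSup hbdd hMS)



lemma mem_support_of_sep {V : Type*} {K : SimpleGraph V} {P : Set V} {c : V}
    (hedge : ∀ a b, K.Adj a b → a ∈ P → b ∈ P ∨ b = c) :
    ∀ {u w : V} (p : K.Walk u w), u ∈ P → w ∉ P → c ∈ p.support := by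
  intro u w p
  induction p with
  | nil => intro hu hw; exact absurd hu hw
  | @cons u y w h q ih =>
    intro hu hw
    rw [SimpleGraph.Walk.support_cons]
    rcases hedge _ _ h hu with hy | hy
    · exact List.mem_cons_of_mem _ (ih hy hw)
    · subst hy; exact List.mem_cons_of_mem _ q.start_mem_support

lemma dist_add_dist_le_dist_of_sep {V : Type*} {K : SimpleGraph V} {P : Set V} {c : V}
    (hedge : ∀ a b, K.Adj a b → a ∈ P → b ∈ P ∨ b = c)
    {u w : V} (hu : u ∈ P) (hw : w ∉ P) (hr : K.Reachable u w) :
    K.dist u c + K.dist c w ≤ K.dist u w := by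
  classical
  obtain ⟨p, hp⟩ := hr.exists_walk_length_eq_dist
  have hc := mem_support_of_sep hedge p hu hw
  calc K.dist u c + K.dist c w ≤ (p.takeUntil c hc).length + (p.dropUntil c hc).length :=
        add_le_add (SimpleGraph.dist_le _) (SimpleGraph.dist_le _)
    _ = p.length := by rw [← SimpleGraph.Walk.length_append, p.take_spec hc]
    _ = K.dist u w := hp

lemma reachable_of_walk_in_set {V : Type*} {G K : SimpleGraph V} {A : Set V}
    (h : ∀ a b, a ∈ A → b ∈ A → G.Adj a b → K.Adj a b) :
    ∀ {u w : V} (p : G.Walk u w), (∀ x ∈ p.support, x ∈ A) → K.Reachable u w := by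
  intro u w p
  induction p with
  | nil => intro _; exact ⟨SimpleGraph.Walk.nil⟩
  | @cons u y w hadj q ih =>
    intro hs
    have h1 : u ∈ A := hs _ (SimpleGraph.Walk.start_mem_support _)
    have h2 : y ∈ A := hs _ (by
      rw [SimpleGraph.Walk.support_cons]
      exact List.mem_cons_of_mem _ q.start_mem_support)
    exact (h _ _ h1 h2 hadj).reachable.trans (ih (fun x hx => hs _ (by
      rw [SimpleGraph.Walk.support_cons]; exact List.mem_cons_of_mem _ hx)))


/-- Lemma 3.1: `G` is the union of three connected subgraphs `H₁, H₂, H₃`, each with at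
least two vertices, pairwise meeting exactly in the single vertex `v₀`.  If the Perron
weight of `H₁` is at least that of `H₂`, then moving the branch `H₃` from `v₀` to a vertex
`vₐ ≠ v₀` of `H₂` strictly increases the distance spectral radius. -/
theorem stmt7 {V : Type*} [Fintype V] (G : SimpleGraph V) (hG : G.Connected)
    (H₁ H₂ H₃ : G.Subgraph)
    (v₀ va : V)
    (hunion : H₁ ⊔ H₂ ⊔ H₃ = (⊤ : G.Subgraph))
    (h12 : H₁.verts ∩ H₂.verts = {v₀}) (h13 : H₁.verts ∩ H₃.verts = {v₀})
    (h23 : H₂.verts ∩ H₃.verts = {v₀})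
    (hc1 : H₁.Connected) (hc2 : H₂.Connected) (hc3 : H₃.Connected)
    (hn1 : H₁.verts.Nontrivial) (hn2 : H₂.verts.Nontrivial) (hn3 : H₃.verts.Nontrivial)
    (hva : va ∈ H₂.verts) (hva0 : va ≠ v₀)
    (X : V → ℝ) (hX : IsDistPerronVector G X)
    (hS : ∑ v ∈ (Set.toFinite H₁.verts).toFinset, X v ≥
          ∑ v ∈ (Set.toFinite H₂.verts).toFinset, X v) :
    distSpectralRadius (reattach G H₃ v₀ va) > distSpectralRadius G := by
  classical
  obtain ⟨hXpos, hXnorm, hXeig⟩ := hX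
  set K := reattach G H₃ v₀ va with hKdef
  -- basic membership facts
  have hv012 : v₀ ∈ H₁.verts ∩ H₂.verts := by rw [h12]; exact Set.mem_singleton _
  have hv013 : v₀ ∈ H₁.verts ∩ H₃.verts := by rw [h13]; exact Set.mem_singleton _
  have hv01 : v₀ ∈ H₁.verts := hv012.1
  have hv02 : v₀ ∈ H₂.verts := hv012.2
  have hv03 : v₀ ∈ H₃.verts := hv013.2
  have hadjG : ∀ a b, G.Adj a b → H₁.Adj a b ∨ H₂.Adj a b ∨ H₃.Adj a b := by
    intro a b hab
    have h : (H₁ ⊔ H₂ ⊔ H₃).Adj a b := by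
      rw [hunion]; exact (SimpleGraph.Subgraph.top_adj).mpr hab
    rcases (SimpleGraph.Subgraph.sup_adj).mp h with h' | h'
    · rcases (SimpleGraph.Subgraph.sup_adj).mp h' with h'' | h''
      · exact Or.inl h''
      · exact Or.inr (Or.inl h'')
    · exact Or.inr (Or.inr h')
  have hverts : ∀ x : V, x ∈ H₁.verts ∨ x ∈ H₂.verts ∨ x ∈ H₃.verts := by
    intro x
    have h : x ∈ (H₁ ⊔ H₂ ⊔ H₃).verts := by
      rw [hunion, SimpleGraph.Subgraph.verts_top]; exact Set.mem_univ _
    rw [SimpleGraph.Subgraph.verts_sup, SimpleGraph.Subgraph.verts_sup] at h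
    rcases h with (h | h) | h
    · exact Or.inl h
    · exact Or.inr (Or.inl h)
    · exact Or.inr (Or.inr h)
  set Aset : Set V := H₁.verts ∪ H₂.verts with hAsetdef
  set Cset : Set V := H₃.verts \ {v₀} with hCsetdef
  have hACdisj : ∀ x, x ∈ Aset → x ∈ Cset → False := by
    rintro x (hx | hx) ⟨hx3, hxne⟩
    · exact hxne (by have h : x ∈ H₁.verts ∩ H₃.verts := ⟨hx, hx3⟩; rw [h13] at h; exact h)
    · exact hxne (by have h : x ∈ H₂.verts ∩ H₃.verts := ⟨hx, hx3⟩; rw [h23] at h; exact h)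
  have hAC : ∀ x, x ∈ Aset ∨ x ∈ Cset := by
    intro x
    rcases hverts x with h | h | h
    · exact Or.inl (Or.inl h)
    · exact Or.inl (Or.inr h)
    · by_cases hx : x = v₀
      · exact Or.inl (Or.inl (hx ▸ hv01))
      · exact Or.inr ⟨h, hx⟩
  have hvaA : va ∈ Aset := Or.inr hva
  have hv0A : v₀ ∈ Aset := Or.inl hv01
  have hva3 : va ∉ H₃.verts := by
    intro h
    exact hva0 (by have h' : va ∈ H₂.verts ∩ H₃.verts := ⟨hva, h⟩; rw [h23] at h'; exact h')
  have hN3 : ∀ b, b ∈ H₃.neighborSet v₀ → b ∈ Cset ∧ G.Adj v₀ b := by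
    intro b hb
    have hadj : H₃.Adj v₀ b := hb
    exact ⟨⟨hadj.snd_mem, (hadj.adj_sub).ne'⟩, hadj.adj_sub⟩
  -- edges at Cset vertices are H₃-edges
  have hCedge : ∀ a b, a ∈ Cset → G.Adj a b → H₃.Adj a b := by
    rintro a b ⟨ha3, hane⟩ hab
    rcases hadjG a b hab with h | h | h
    · exact absurd (by have h' : a ∈ H₁.verts ∩ H₃.verts := ⟨h.fst_mem, ha3⟩; rw [h13] at h'; exact h') hane
    · exact absurd (by have h' : a ∈ H₂.verts ∩ H₃.verts := ⟨h.fst_mem, ha3⟩; rw [h23] at h'; exact h') hane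
    · exact h
  -- K adjacency lemmas
  have hGK : ∀ a b, a ∈ Aset → b ∈ Aset → G.Adj a b → K.Adj a b := by
    intro a b ha hb hab
    rw [hKdef, reattach, SimpleGraph.fromRel_adj]
    refine ⟨hab.ne, Or.inl (Or.inl ⟨hab, ?_⟩)⟩
    rintro (⟨rfl, hbN⟩ | ⟨rfl, haN⟩)
    · exact hACdisj b hb (hN3 b hbN).1
    · exact hACdisj a ha (hN3 a haN).1
  have hKG : ∀ a b, K.Adj a b → a ∈ Aset → b ∈ Aset → G.Adj a b := by
    intro a b hab ha hb
    rw [hKdef, reattach, SimpleGraph.fromRel_adj] at hab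
    obtain ⟨hne, hab⟩ := hab
    rcases hab with (⟨hg, -⟩ | ⟨rfl, hbN⟩) | (⟨hg, -⟩ | ⟨rfl, haN⟩)
    · exact hg
    · exact absurd (hN3 b hbN).1 (fun h => hACdisj b hb h)
    · exact hg.symm
    · exact absurd (hN3 a haN).1 (fun h => hACdisj a ha h)
  have hKC : ∀ a b, K.Adj a b → a ∈ Cset → (b ∈ Cset ∧ G.Adj a b) ∨ (b = va ∧ a ∈ H₃.neighborSet v₀) := by
    intro a b hab haC
    rw [hKdef, reattach, SimpleGraph.fromRel_adj] at hab
    obtain ⟨hne, hab⟩ := hab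
    rcases hab with (⟨hg, hexc⟩ | ⟨rfl, hbN⟩) | (⟨hg, hexc⟩ | ⟨rfl, haN⟩)
    · have h3 : H₃.Adj a b := hCedge a b haC hg
      by_cases hb : b = v₀
      · exact absurd (Or.inr ⟨hb, by rw [SimpleGraph.Subgraph.mem_neighborSet]; exact hb ▸ h3.symm⟩) hexc
      · exact Or.inl ⟨⟨h3.snd_mem, hb⟩, hg⟩
    · exact absurd haC.1 hva3
    · have h3 : H₃.Adj a b := hCedge a b haC hg.symm
      by_cases hb : b = v₀
      · exact absurd (Or.inl ⟨hb, by rw [SimpleGraph.Subgraph.mem_neighborSet]; exact hb ▸ h3.symm⟩) hexc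
      · exact Or.inl ⟨⟨h3.snd_mem, hb⟩, hg.symm⟩
    · exact Or.inr ⟨rfl, haN⟩
  have hKcross : ∀ a b, K.Adj a b → a ∈ Aset → b ∈ Cset → a = va := by
    intro a b hab ha hb
    rcases hKC b a hab.symm hb with ⟨haC, -⟩ | ⟨h, -⟩
    · exact absurd haC (fun h => hACdisj a ha h)
    · exact h
  have hG2edge : ∀ a b, G.Adj a b → a ∈ H₂.verts \ {v₀} → b ∈ H₂.verts \ {v₀} ∨ b = v₀ := by
    rintro a b hab ⟨ha2, hane⟩
    rcases hadjG a b hab with h | h | h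
    · exact absurd (by have h' : a ∈ H₁.verts ∩ H₂.verts := ⟨h.fst_mem, ha2⟩; rw [h12] at h'; exact h') hane
    · by_cases hb : b = v₀
      · exact Or.inr hb
      · exact Or.inl ⟨h.snd_mem, hb⟩
    · exact absurd (by have h' : a ∈ H₂.verts ∩ H₃.verts := ⟨ha2, h.fst_mem⟩; rw [h23] at h'; exact h') hane
  -- reachability to va in K
  have hsubreach : ∀ (Hi : G.Subgraph), Hi.Connected → Hi.verts ⊆ Aset →
      ∀ x y, x ∈ Hi.verts → y ∈ Hi.verts → K.Reachable x y := by
    intro Hi hc hsubA x y hx hy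
    obtain ⟨q⟩ := hc.preconnected ⟨x, hx⟩ ⟨y, hy⟩
    refine reachable_of_walk_in_set hGK (u := Hi.hom ⟨x, hx⟩) (w := Hi.hom ⟨y, hy⟩) (q.map (SimpleGraph.Subgraph.hom Hi)) ?_
    intro z hz
    rw [SimpleGraph.Walk.support_map] at hz
    obtain ⟨⟨z', hz'⟩, -, rfl⟩ := List.mem_map.mp hz
    exact hsubA hz'
  have hreachA : ∀ u, u ∈ Aset → K.Reachable u va := by
    rintro u (hu | hu)
    · exact (hsubreach H₁ hc1 Set.subset_union_left u v₀ hu hv01).trans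
        (hsubreach H₂ hc2 Set.subset_union_right v₀ va hv02 hva)
    · exact hsubreach H₂ hc2 Set.subset_union_right u va hu hva
  have hreachC : ∀ u, u ∈ Cset → K.Reachable u va := by
    intro u huC
    have claim : ∀ (x y : H₃.verts) (q : H₃.coe.Walk x y),
        (y : V) = v₀ → (x : V) ≠ v₀ → K.Reachable (x : V) va := by
      intro x y q
      induction q with
      | nil => intro hy hx; exact absurd hy hx
      | @cons x y' z hadj q ih =>
        intro hz hx
        have hadj3 : H₃.Adj (x : V) (y' : V) := hadj
        by_cases hy' : (y' : V) = v₀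
        · have hxN : (x : V) ∈ H₃.neighborSet v₀ := by
            rw [SimpleGraph.Subgraph.mem_neighborSet]
            exact hy' ▸ hadj3.symm
          have hxva : (x : V) ≠ va := fun h => hva3 (h ▸ x.2)
          have : K.Adj (x : V) va := by
            rw [hKdef, reattach, SimpleGraph.fromRel_adj]
            exact ⟨hxva, Or.inr (Or.inr ⟨rfl, hxN⟩)⟩
          exact this.reachable
        · have hKxy : K.Adj (x : V) (y' : V) := by
            rw [hKdef, reattach, SimpleGraph.fromRel_adj]
            refine ⟨hadj3.adj_sub.ne, Or.inl (Or.inl ⟨hadj3.adj_sub, ?_⟩)⟩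
            rintro (⟨h1, -⟩ | ⟨h1, -⟩)
            · exact hx h1
            · exact hy' h1
          exact hKxy.reachable.trans (ih hz hy')
    obtain ⟨q⟩ := hc3.preconnected ⟨u, huC.1⟩ ⟨v₀, hv03⟩
    exact claim ⟨u, huC.1⟩ ⟨v₀, hv03⟩ q rfl huC.2
  have hKconn : K.Connected := by
    rw [SimpleGraph.connected_iff]
    constructor
    · intro u w
      have hu : K.Reachable u va := by
        rcases hAC u with h | h
        · exact hreachA u h
        · exact hreachC u h
      have hw : K.Reachable w va := by
        rcases hAC w with h | h
        · exact hreachA w h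
        · exact hreachC w h
      exact hu.trans hw.symm
    · exact ⟨v₀⟩
  -- key length claim
  have hd1adj : ∀ a b, G.Adj a b → G.dist a b ≤ 1 := by
    intro a b h
    exact le_of_eq (SimpleGraph.dist_eq_one_iff_adj.mpr h)
  have key : ∀ n : ℕ, ∀ (u w : V) (p : K.Walk u w), p.length = n →
      ((u ∈ Aset → w ∈ Aset → G.dist u w ≤ p.length) ∧
       (u ∈ Cset → w ∈ Aset → G.dist u v₀ + G.dist va w ≤ p.length) ∧
       (u ∈ Cset → w ∈ Cset → G.dist u w ≤ p.length)) := by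
    intro n
    induction n using Nat.strong_induction_on with
    | _ n ih =>
      intro u w p hp
      cases p with
      | nil =>
        refine ⟨fun _ _ => by simp, fun hu hw => absurd hu (fun h => hACdisj u hw h), fun _ _ => by simp⟩
      | @cons u y w h q =>
        have hq : q.length < n := by rw [← hp]; simp
        have ihq := ih q.length hq y w q rfl
        refine ⟨?_, ?_, ?_⟩
        · intro hu hw
          rcases hAC y with hy | hy
          · have h1 := hd1adj u y (hKG u y h hu hy)
            have h2 := ihq.1 hy hw
            have h3 := hG.dist_triangle (u := u) (v := y) (w := w)
            simp only [SimpleGraph.Walk.length_cons]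
            omega
          · have huva : u = va := hKcross u y h hu hy
            have h2 := ihq.2.1 hy hw
            have h4 : G.dist u w = G.dist va w := by rw [huva]
            simp only [SimpleGraph.Walk.length_cons]
            omega
        · intro hu hw
          rcases hKC u y h hu with ⟨hyC, hGuy⟩ | ⟨hyva, huN⟩
          · have h1 := hd1adj u y hGuy
            have h2 := ihq.2.1 hyC hw
            have h3 := hG.dist_triangle (u := u) (v := y) (w := v₀)
            simp only [SimpleGraph.Walk.length_cons]
            omega
          · have hGuv0 : G.Adj u v₀ := (SimpleGraph.Subgraph.Adj.adj_sub huN).symm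
            have h1 := hd1adj u v₀ hGuv0
            have hyA : y ∈ Aset := by rw [hyva]; exact hvaA
            have h2 := ihq.1 hyA hw
            have h4 : G.dist y w = G.dist va w := by rw [hyva]
            simp only [SimpleGraph.Walk.length_cons]
            omega
        · intro hu hw
          rcases hKC u y h hu with ⟨hyC, hGuy⟩ | ⟨hyva, huN⟩
          · have h1 := hd1adj u y hGuy
            have h2 := ihq.2.2 hyC hw
            have h3 := hG.dist_triangle (u := u) (v := y) (w := w)
            simp only [SimpleGraph.Walk.length_cons]
            omega
          · have hyA : y ∈ Aset := by rw [hyva]; exact hvaA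
            have hqr : q.reverse.length < n := by
              rw [SimpleGraph.Walk.length_reverse]; exact hq
            have h2' := (ih q.reverse.length hqr w y q.reverse rfl).2.1 hw hyA
            rw [SimpleGraph.Walk.length_reverse] at h2'
            have hGuv0 : G.Adj u v₀ := (SimpleGraph.Subgraph.Adj.adj_sub huN).symm
            have h1 := hd1adj u v₀ hGuv0
            have h3 := hG.dist_triangle (u := u) (v := v₀) (w := w)
            have h4 : G.dist y y = 0 := SimpleGraph.dist_self
            have h5 : G.dist w v₀ = G.dist v₀ w := SimpleGraph.dist_comm
            simp only [SimpleGraph.Walk.length_cons]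
            omega
  -- distance comparisons
  have D1 : ∀ u w, u ∈ Aset → w ∈ Aset → G.dist u w ≤ K.dist u w := by
    intro u w hu hw
    obtain ⟨p, hp⟩ := hKconn.exists_walk_length_eq_dist u w
    have := (key p.length u w p rfl).1 hu hw
    omega
  have D2 : ∀ u w, u ∈ Cset → w ∈ Aset → G.dist u v₀ + G.dist va w ≤ K.dist u w := by
    intro u w hu hw
    obtain ⟨p, hp⟩ := hKconn.exists_walk_length_eq_dist u w
    have := (key p.length u w p rfl).2.1 hu hw
    omega
  have D3 : ∀ u w, u ∈ Cset → w ∈ Cset → G.dist u w ≤ K.dist u w := by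
    intro u w hu hw
    obtain ⟨p, hp⟩ := hKconn.exists_walk_length_eq_dist u w
    have := (key p.length u w p rfl).2.2 hu hw
    omega
  have D4 : ∀ w, w ∈ H₁.verts → G.dist va v₀ + G.dist v₀ w ≤ G.dist va w := by
    intro w hw
    refine dist_add_dist_le_dist_of_sep (P := H₂.verts \ {v₀}) (c := v₀) hG2edge
      ⟨hva, hva0⟩ ?_ (hG va w)
    rintro ⟨hw2, hwne⟩
    exact hwne (by have h' : w ∈ H₁.verts ∩ H₂.verts := ⟨hw, hw2⟩; rw [h12] at h'; exact h')
  have hδpos : 0 < G.dist v₀ va := hG.pos_dist_of_ne (Ne.symm hva0)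
  -- real-number part
  have hρG : ∑ v, X v * (distMatrix G).mulVec X v = distSpectralRadius G := by
    rw [hXeig]
    simp only [Pi.smul_apply, smul_eq_mul]
    calc ∑ v, X v * (distSpectralRadius G * X v)
        = distSpectralRadius G * ∑ v, X v ^ 2 := by
          rw [Finset.mul_sum]; refine Finset.sum_congr rfl fun v _ => by ring
      _ = distSpectralRadius G := by rw [hXnorm, mul_one]
  have hKherm : (distMatrix K).IsHermitian := by
    unfold Matrix.IsHermitian
    ext i j
    simp only [Matrix.conjTranspose_apply, distMatrix, star_trivial]
    rw [SimpleGraph.dist_comm]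
  have hray : ∑ v, X v * (distMatrix K).mulVec X v ≤ distSpectralRadius K :=
    rayleigh_le_sSup (distMatrix K) hKherm X hXnorm
  -- double sum forms
  have hdouble : ∀ (L : SimpleGraph V), ∑ v, X v * (distMatrix L).mulVec X v
      = ∑ u, ∑ w, (L.dist u w : ℝ) * (X u * X w) := by
    intro L
    refine Finset.sum_congr rfl fun u _ => ?_
    simp only [Matrix.mulVec, dotProduct, distMatrix]
    rw [Finset.mul_sum]
    refine Finset.sum_congr rfl fun w _ => by ring
  -- finsets
  set FA := (Set.toFinite Aset).toFinset with hFAdef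
  set FC := (Set.toFinite Cset).toFinset with hFCdef
  set F1 := (Set.toFinite H₁.verts).toFinset with hF1def
  set F2 := (Set.toFinite H₂.verts).toFinset with hF2def
  have hmemFA : ∀ x, x ∈ FA ↔ x ∈ Aset := fun x => Set.Finite.mem_toFinset _
  have hmemFC : ∀ x, x ∈ FC ↔ x ∈ Cset := fun x => Set.Finite.mem_toFinset _
  have hmemF1 : ∀ x, x ∈ F1 ↔ x ∈ H₁.verts := fun x => Set.Finite.mem_toFinset _
  have hmemF2 : ∀ x, x ∈ F2 ↔ x ∈ H₂.verts := fun x => Set.Finite.mem_toFinset _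
  have hunivsplit : (Finset.univ : Finset V) = FA ∪ FC := by
    ext x
    simp only [Finset.mem_univ, Finset.mem_union, hmemFA, hmemFC, true_iff]
    exact hAC x
  have hdisjF : Disjoint FA FC := by
    rw [Finset.disjoint_left]
    intro x hx hx'
    exact hACdisj x ((hmemFA x).mp hx) ((hmemFC x).mp hx')
  obtain ⟨T, hTdef⟩ : ∃ T : ℝ, T = ∑ u ∈ FC, X u := ⟨_, rfl⟩
  obtain ⟨EE, hEEdef⟩ : ∃ EE : ℝ, EE = ∑ w ∈ FA, ((G.dist va w : ℝ) - G.dist v₀ w) * X w := ⟨_, rfl⟩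
  obtain ⟨δ, hδdef⟩ : ∃ δ : ℝ, δ = (G.dist v₀ va : ℝ) := ⟨_, rfl⟩
  -- block inequalities
  have splitsum : ∀ f : V → ℝ, ∑ v, f v = ∑ v ∈ FA, f v + ∑ v ∈ FC, f v := by
    intro f
    rw [hunivsplit]
    exact Finset.sum_union hdisjF
  have hδ0 : (0:ℝ) < δ := by rw [hδdef]; exact_mod_cast hδpos
  have hΔAA : ∀ u ∈ FA, ∀ w ∈ FA, 0 ≤ ((K.dist u w : ℝ) - G.dist u w) * (X u * X w) := by
    intro u hu w hw
    have h := D1 u w ((hmemFA u).mp hu) ((hmemFA w).mp hw)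
    have h' : (G.dist u w : ℝ) ≤ K.dist u w := by exact_mod_cast h
    have hx : 0 < X u * X w := mul_pos (hXpos u) (hXpos w)
    nlinarith
  have hΔCC : ∀ u ∈ FC, ∀ w ∈ FC, 0 ≤ ((K.dist u w : ℝ) - G.dist u w) * (X u * X w) := by
    intro u hu w hw
    have h := D3 u w ((hmemFC u).mp hu) ((hmemFC w).mp hw)
    have h' : (G.dist u w : ℝ) ≤ K.dist u w := by exact_mod_cast h
    have hx : 0 < X u * X w := mul_pos (hXpos u) (hXpos w)
    nlinarith
  have hΔCA : ∀ u ∈ FC, ∀ w ∈ FA,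
      ((G.dist va w : ℝ) - G.dist v₀ w) * (X u * X w)
        ≤ ((K.dist u w : ℝ) - G.dist u w) * (X u * X w) := by
    intro u hu w hw
    have h2 := D2 u w ((hmemFC u).mp hu) ((hmemFA w).mp hw)
    have htri := hG.dist_triangle (u := u) (v := v₀) (w := w)
    have hx : 0 < X u * X w := mul_pos (hXpos u) (hXpos w)
    have h2' : (G.dist u v₀ : ℝ) + G.dist va w ≤ K.dist u w := by exact_mod_cast h2
    have htri' : (G.dist u w : ℝ) ≤ G.dist u v₀ + G.dist v₀ w := by exact_mod_cast htri
    nlinarith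
  have hΔAC : ∀ u ∈ FA, ∀ w ∈ FC,
      ((G.dist va u : ℝ) - G.dist v₀ u) * (X u * X w)
        ≤ ((K.dist u w : ℝ) - G.dist u w) * (X u * X w) := by
    intro u hu w hw
    have h2 := D2 w u ((hmemFC w).mp hw) ((hmemFA u).mp hu)
    have htri := hG.dist_triangle (u := w) (v := v₀) (w := u)
    have hx : 0 < X u * X w := mul_pos (hXpos u) (hXpos w)
    have h2' : (G.dist w v₀ : ℝ) + G.dist va u ≤ K.dist w u := by exact_mod_cast h2
    have htri' : (G.dist w u : ℝ) ≤ G.dist w v₀ + G.dist v₀ u := by exact_mod_cast htri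
    have e1 : (K.dist u w : ℝ) = K.dist w u := by rw [SimpleGraph.dist_comm]
    have e2 : (G.dist u w : ℝ) = G.dist w u := by rw [SimpleGraph.dist_comm]
    nlinarith
  obtain ⟨RG, hRGdef⟩ : ∃ RG : ℝ, RG = ∑ u, ∑ w, (G.dist u w : ℝ) * (X u * X w) := ⟨_, rfl⟩
  obtain ⟨RK, hRKdef⟩ : ∃ RK : ℝ, RK = ∑ u, ∑ w, (K.dist u w : ℝ) * (X u * X w) := ⟨_, rfl⟩
  have hblocks : 2 * (T * EE) ≤ RK - RG := by
    have hsum : RK - RG = ∑ u, ∑ w, ((K.dist u w : ℝ) - G.dist u w) * (X u * X w) := by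
      rw [hRKdef, hRGdef, ← Finset.sum_sub_distrib]
      refine Finset.sum_congr rfl fun u _ => ?_
      rw [← Finset.sum_sub_distrib]
      refine Finset.sum_congr rfl fun w _ => by ring
    have hinner : ∀ u : V, ∑ w, ((K.dist u w : ℝ) - G.dist u w) * (X u * X w)
        = ∑ w ∈ FA, ((K.dist u w : ℝ) - G.dist u w) * (X u * X w)
          + ∑ w ∈ FC, ((K.dist u w : ℝ) - G.dist u w) * (X u * X w) := by
      intro u
      exact splitsum _
    have hsum2 : RK - RG =
        (∑ u ∈ FA, ∑ w ∈ FA, ((K.dist u w : ℝ) - G.dist u w) * (X u * X w)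
          + ∑ u ∈ FA, ∑ w ∈ FC, ((K.dist u w : ℝ) - G.dist u w) * (X u * X w))
        + (∑ u ∈ FC, ∑ w ∈ FA, ((K.dist u w : ℝ) - G.dist u w) * (X u * X w)
          + ∑ u ∈ FC, ∑ w ∈ FC, ((K.dist u w : ℝ) - G.dist u w) * (X u * X w)) := by
      rw [hsum, splitsum (fun u => ∑ w, ((K.dist u w : ℝ) - G.dist u w) * (X u * X w))]
      rw [← Finset.sum_add_distrib, ← Finset.sum_add_distrib]
      congr 1
      · exact Finset.sum_congr rfl fun u _ => hinner u
      · exact Finset.sum_congr rfl fun u _ => hinner u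
    have hB1 : (0:ℝ) ≤ ∑ u ∈ FA, ∑ w ∈ FA, ((K.dist u w : ℝ) - G.dist u w) * (X u * X w) :=
      Finset.sum_nonneg fun u hu => Finset.sum_nonneg fun w hw => hΔAA u hu w hw
    have hB4 : (0:ℝ) ≤ ∑ u ∈ FC, ∑ w ∈ FC, ((K.dist u w : ℝ) - G.dist u w) * (X u * X w) :=
      Finset.sum_nonneg fun u hu => Finset.sum_nonneg fun w hw => hΔCC u hu w hw
    have hB2 : EE * T ≤ ∑ u ∈ FA, ∑ w ∈ FC, ((K.dist u w : ℝ) - G.dist u w) * (X u * X w) := by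
      have step : ∑ u ∈ FA, ∑ w ∈ FC, ((G.dist va u : ℝ) - G.dist v₀ u) * (X u * X w) = EE * T := by
        rw [hEEdef, hTdef, Finset.sum_mul]
        refine Finset.sum_congr rfl fun u _ => ?_
        rw [Finset.mul_sum]
        refine Finset.sum_congr rfl fun w _ => by ring
      rw [← step]
      exact Finset.sum_le_sum fun u hu => Finset.sum_le_sum fun w hw => hΔAC u hu w hw
    have hB3 : T * EE ≤ ∑ u ∈ FC, ∑ w ∈ FA, ((K.dist u w : ℝ) - G.dist u w) * (X u * X w) := by
      have step : ∑ u ∈ FC, ∑ w ∈ FA, ((G.dist va w : ℝ) - G.dist v₀ w) * (X u * X w) = T * EE := by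
        rw [hEEdef, hTdef, Finset.sum_mul]
        refine Finset.sum_congr rfl fun u _ => ?_
        rw [Finset.mul_sum]
        refine Finset.sum_congr rfl fun w _ => by ring
      rw [← step]
      exact Finset.sum_le_sum fun u hu => Finset.sum_le_sum fun w hw => hΔCA u hu w hw
    rw [hsum2]
    linarith
  have hT : 0 < T := by
    obtain ⟨x, hx, y, hy, hxy⟩ := hn3
    have hz : ∃ z, z ∈ FC := by
      by_cases hxv : x = v₀
      · refine ⟨y, (hmemFC y).mpr ⟨hy, ?_⟩⟩
        intro h
        exact hxy (by rw [hxv, h])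
      · exact ⟨x, (hmemFC x).mpr ⟨hx, hxv⟩⟩
    obtain ⟨z, hz⟩ := hz
    rw [hTdef]
    exact Finset.sum_pos' (fun i _ => (hXpos i).le) ⟨z, hz, hXpos z⟩
  have hEEpos : 0 < EE := by
    have hFA12 : FA = F1 ∪ (F2 \ F1) := by
      ext x
      simp only [Finset.mem_union, Finset.mem_sdiff, hmemFA, hmemF1, hmemF2]
      have : x ∈ Aset ↔ x ∈ H₁.verts ∨ x ∈ H₂.verts := Iff.rfl
      rw [this]
      tauto
    have hdisj12 : Disjoint F1 (F2 \ F1) := Finset.disjoint_sdiff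
    have hEEsplit : EE = ∑ w ∈ F1, ((G.dist va w : ℝ) - G.dist v₀ w) * X w
        + ∑ w ∈ F2 \ F1, ((G.dist va w : ℝ) - G.dist v₀ w) * X w := by
      rw [hEEdef, hFA12, Finset.sum_union hdisj12]
    have hb1 : δ * ∑ w ∈ F1, X w ≤ ∑ w ∈ F1, ((G.dist va w : ℝ) - G.dist v₀ w) * X w := by
      rw [Finset.mul_sum]
      refine Finset.sum_le_sum fun w hw => ?_
      have h4 := D4 w ((hmemF1 w).mp hw)
      have h4' : (G.dist va v₀ : ℝ) + G.dist v₀ w ≤ G.dist va w := by exact_mod_cast h4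
      have hcomm : (G.dist va v₀ : ℝ) = G.dist v₀ va := by rw [SimpleGraph.dist_comm]
      have hδ' : δ = (G.dist v₀ va : ℝ) := hδdef
      have hxw := (hXpos w).le
      refine mul_le_mul_of_nonneg_right ?_ hxw
      linarith
    have hb2 : (-δ) * ∑ w ∈ F2 \ F1, X w
        ≤ ∑ w ∈ F2 \ F1, ((G.dist va w : ℝ) - G.dist v₀ w) * X w := by
      rw [Finset.mul_sum]
      refine Finset.sum_le_sum fun w hw => ?_
      have htri := hG.dist_triangle (u := v₀) (v := va) (w := w)
      have htri' : (G.dist v₀ w : ℝ) ≤ G.dist v₀ va + G.dist va w := by exact_mod_cast htri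
      have hδ' : δ = (G.dist v₀ va : ℝ) := hδdef
      have hxw := (hXpos w).le
      refine mul_le_mul_of_nonneg_right ?_ hxw
      linarith
    have hF21 : F2 ∩ F1 = {v₀} := by
      ext x
      simp only [Finset.mem_inter, Finset.mem_singleton, hmemF1, hmemF2]
      constructor
      · rintro ⟨h2, h1⟩
        have h' : x ∈ H₁.verts ∩ H₂.verts := ⟨h1, h2⟩
        rw [h12] at h'
        exact h'
      · rintro rfl
        exact ⟨hv02, hv01⟩
    have hsumF2 : ∑ w ∈ F2 \ F1, X w = (∑ w ∈ F2, X w) - X v₀ := by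
      have h := Finset.sum_inter_add_sum_sdiff F2 F1 X
      rw [hF21, Finset.sum_singleton] at h
      linarith
    have hXv0 := hXpos v₀
    have hge : ∑ w ∈ F1, X w ≥ ∑ w ∈ F2, X w := hS
    have hmm : 0 ≤ δ * ((∑ w ∈ F1, X w) - ∑ w ∈ F2, X w) :=
      mul_nonneg hδ0.le (sub_nonneg.mpr hge)
    have he : δ * (∑ w ∈ F1, X w) + (-δ) * ((∑ w ∈ F2, X w) - X v₀)
        = δ * ((∑ w ∈ F1, X w) - ∑ w ∈ F2, X w) + δ * X v₀ := by ring
    have hdpos : 0 < δ * X v₀ := mul_pos hδ0 hXv0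
    rw [hEEsplit]
    rw [hsumF2] at hb2
    linarith
  have h1 : RG = distSpectralRadius G := hRGdef.trans ((hdouble G).symm.trans hρG)
  have h2 : RK ≤ distSpectralRadius K := by
    rw [hRKdef, ← hdouble K]
    exact hray
  have hTE : 0 < T * EE := mul_pos hT hEEpos
  have : RG < RK := by linarith
  have hgoal : distSpectralRadius G < distSpectralRadius K := by linarith
  exact hgoal
end

section
/- In the tree T_1 (path v_k ⋯ v_1 u_1 ⋯ u_k with n − 2k ≥ 1 pendant vertices attached at v_1), the distance Perron vector satisfies x_{v_k} ≥ x_{v_{2k+1}}, i.e., the entry at the far endpoint of the shorter arm is at least the entry at any pendant vertex attached to v_1; moreover, if k > 2 the inequality is strict. -/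
open SimpleGraph

/-- The tree `T₁`: the path `v_k ⋯ v_1 u_1 ⋯ u_k` on `2k` vertices together with `m`
pendant vertices attached at `v_1`.  Here `Sum.inl i` is `v_{i+1}`, `Sum.inr (Sum.inl i)`
is `u_{i+1}`, and `Sum.inr (Sum.inr j)` are the pendant vertices. -/
def treeT1 (k m : ℕ) : SimpleGraph (Fin k ⊕ (Fin k ⊕ Fin m)) :=
  SimpleGraph.fromRel (fun a b =>
    match a, b with
    | Sum.inl i, Sum.inl j => (i : ℕ) + 1 = (j : ℕ)
    | Sum.inr (Sum.inl i), Sum.inr (Sum.inl j) => (i : ℕ) + 1 = (j : ℕ)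
    | Sum.inl i, Sum.inr (Sum.inl j) => (i : ℕ) = 0 ∧ (j : ℕ) = 0
    | Sum.inl i, Sum.inr (Sum.inr _) => (i : ℕ) = 0
    | _, _ => False)



namespace T1aux

variable {k m : ℕ}

def br : Fin k ⊕ (Fin k ⊕ Fin m) → ℕ
  | Sum.inl _ => 0
  | Sum.inr (Sum.inl _) => 1
  | Sum.inr (Sum.inr s) => s + 2

def dp : Fin k ⊕ (Fin k ⊕ Fin m) → ℕ
  | Sum.inl i => i
  | Sum.inr (Sum.inl i) => i + 1
  | Sum.inr (Sum.inr _) => 1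

def tdist (a b : Fin k ⊕ (Fin k ⊕ Fin m)) : ℕ :=
  if br a = br b then Nat.dist (dp a) (dp b) else dp a + dp b

lemma key (a b c : Fin k ⊕ (Fin k ⊕ Fin m)) (h : (treeT1 k m).Adj a b) :
    tdist a c ≤ tdist b c + 1 := by
  rcases a with i|i|i <;> rcases b with j|j|j <;> rcases c with l|l|l <;>
    simp only [treeT1, fromRel_adj, ne_eq, Sum.inl.injEq, Sum.inr.injEq, Fin.ext_iff,
      Sum.inl_ne_inr, Sum.inr_ne_inl, not_false_iff, true_and, false_and, and_false,
      or_false, false_or] at h <;>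
    simp only [tdist] <;> split_ifs <;> simp only [br, dp, Nat.dist, not_true_eq_false] at * <;> omega

end T1aux

namespace T1aux

variable {k m : ℕ}

lemma tdist_self (a : Fin k ⊕ (Fin k ⊕ Fin m)) : tdist a a = 0 := by
  simp [tdist, Nat.dist]

lemma tdist_le_length {a b : Fin k ⊕ (Fin k ⊕ Fin m)} (w : (treeT1 k m).Walk a b) :
    tdist a b ≤ w.length := by
  induction w with
  | nil => simp [tdist_self]
  | cons h p ih =>
      calc tdist _ _ ≤ tdist _ _ + 1 := key _ _ _ h
      _ ≤ p.length + 1 := by omega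

lemma adj_vv {i j : Fin k} (h : (i:ℕ) + 1 = (j:ℕ)) :
    (treeT1 k m).Adj (.inl i) (.inl j) := by
  refine ⟨?_, Or.inl h⟩
  simp only [ne_eq, Sum.inl.injEq, Fin.ext_iff]; omega

lemma adj_uu {i j : Fin k} (h : (i:ℕ) + 1 = (j:ℕ)) :
    (treeT1 k m).Adj (.inr (.inl i)) (.inr (.inl j)) := by
  refine ⟨?_, Or.inl h⟩
  simp only [ne_eq, Sum.inr.injEq, Sum.inl.injEq, Fin.ext_iff]; omega

lemma adj_hub_u (hk : 0 < k) :
    (treeT1 k m).Adj (.inl ⟨0, hk⟩) (.inr (.inl ⟨0, hk⟩)) := by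
  exact ⟨by simp, Or.inl ⟨rfl, rfl⟩⟩

lemma adj_hub_p (hk : 0 < k) (s : Fin m) :
    (treeT1 k m).Adj (.inl ⟨0, hk⟩) (.inr (.inr s)) := by
  exact ⟨by simp, Or.inl rfl⟩

lemma walk_v (n : ℕ) : ∀ (i j : Fin k), (j:ℕ) + n = (i:ℕ) →
    ∃ w : (treeT1 k m).Walk (.inl i) (.inl j), w.length = n := by
  induction n with
  | zero =>
      intro i j h
      have : j = i := by ext; omega
      subst this; exact ⟨Walk.nil, rfl⟩
  | succ n ih =>
      intro i j h
      have hi : 0 < (i:ℕ) := by omega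
      set i' : Fin k := ⟨(i:ℕ) - 1, by omega⟩ with hi'
      obtain ⟨w, hw⟩ := ih i' j (by simp [hi']; omega)
      exact ⟨Walk.cons (adj_vv (by simp [hi']; omega)).symm w, by simp [hw]⟩

lemma walk_u (n : ℕ) : ∀ (i j : Fin k), (j:ℕ) + n = (i:ℕ) →
    ∃ w : (treeT1 k m).Walk (.inr (.inl i)) (.inr (.inl j)), w.length = n := by
  induction n with
  | zero =>
      intro i j h
      have : j = i := by ext; omega
      subst this; exact ⟨Walk.nil, rfl⟩
  | succ n ih =>
      intro i j h
      have hi : 0 < (i:ℕ) := by omega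
      set i' : Fin k := ⟨(i:ℕ) - 1, by omega⟩ with hi'
      obtain ⟨w, hw⟩ := ih i' j (by simp [hi']; omega)
      exact ⟨Walk.cons (adj_uu (by simp [hi']; omega)).symm w, by simp [hw]⟩

lemma walk_to_hub (hk : 0 < k) (a : Fin k ⊕ (Fin k ⊕ Fin m)) :
    ∃ w : (treeT1 k m).Walk a (.inl ⟨0, hk⟩), w.length = dp a := by
  rcases a with i | i | s
  · simpa [dp] using walk_v (m := m) (i:ℕ) i ⟨0, hk⟩ (by simp)
  · obtain ⟨w, hw⟩ := walk_u (m := m) (i:ℕ) i ⟨0, hk⟩ (by simp)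
    exact ⟨w.concat (adj_hub_u hk).symm, by simp [hw, dp]⟩
  · exact ⟨Walk.cons (adj_hub_p hk s).symm Walk.nil, rfl⟩

lemma exists_walk (hk : 0 < k) (a b : Fin k ⊕ (Fin k ⊕ Fin m)) :
    ∃ w : (treeT1 k m).Walk a b, w.length = tdist a b := by
  by_cases hbr : br a = br b
  · rcases a with i | i | s <;> rcases b with j | j | t <;>
      simp only [br, dp, tdist, hbr, if_true, Nat.dist] at *
    · rcases le_total (i:ℕ) (j:ℕ) with hle | hle
      · obtain ⟨w, hw⟩ := walk_v (m := m) ((j:ℕ) - i) j i (by omega)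
        exact ⟨w.reverse, by simp [hw]; omega⟩
      · obtain ⟨w, hw⟩ := walk_v ((i:ℕ) - j) i j (by omega)
        exact ⟨w, by simp [hw]; omega⟩
    all_goals try omega
    · rcases le_total (i:ℕ) (j:ℕ) with hle | hle
      · obtain ⟨w, hw⟩ := walk_u (m := m) ((j:ℕ) - i) j i (by omega)
        exact ⟨w.reverse, by simp [hw]; omega⟩
      · obtain ⟨w, hw⟩ := walk_u ((i:ℕ) - j) i j (by omega)
        exact ⟨w, by simp [hw]; omega⟩
    · have : s = t := by ext; omega
      subst this
      exact ⟨Walk.nil, by simp⟩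
  · obtain ⟨w1, h1⟩ := walk_to_hub hk a
    obtain ⟨w2, h2⟩ := walk_to_hub hk b
    exact ⟨w1.append w2.reverse, by simp [h1, h2, tdist, hbr]⟩

lemma dist_eq (hk : 0 < k) (a b : Fin k ⊕ (Fin k ⊕ Fin m)) :
    (treeT1 k m).dist a b = tdist a b := by
  obtain ⟨w, hw⟩ := exists_walk hk a b
  refine le_antisymm (hw ▸ SimpleGraph.dist_le w) ?_
  obtain ⟨w', hw'⟩ := Reachable.exists_walk_length_eq_dist ⟨w⟩
  exact hw' ▸ tdist_le_length w'

end T1aux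

namespace T1aux

variable {k m : ℕ}

lemma tdist_ll (i j : Fin k) : tdist (m := m) (Sum.inl i) (Sum.inl j) = Nat.dist i j := by
  simp [tdist, br, dp]

lemma tdist_lu (i j : Fin k) :
    tdist (m := m) (Sum.inl i) (Sum.inr (Sum.inl j)) = (i:ℕ) + (j:ℕ) + 1 := by
  simp [tdist, br, dp]; omega

lemma tdist_lp (i : Fin k) (s : Fin m) :
    tdist (Sum.inl i) (Sum.inr (Sum.inr s)) = (i:ℕ) + 1 := by
  simp [tdist, br, dp]

lemma tdist_ul (i j : Fin k) :
    tdist (m := m) (Sum.inr (Sum.inl i)) (Sum.inl j) = (i:ℕ) + (j:ℕ) + 1 := by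
  simp [tdist, br, dp]; omega

lemma tdist_uu (i j : Fin k) :
    tdist (m := m) (Sum.inr (Sum.inl i)) (Sum.inr (Sum.inl j)) = Nat.dist i j := by
  simp [tdist, br, dp, Nat.dist]

lemma tdist_up (i : Fin k) (s : Fin m) :
    tdist (Sum.inr (Sum.inl i)) (Sum.inr (Sum.inr s)) = (i:ℕ) + 2 := by
  simp [tdist, br, dp]

lemma tdist_pl (s : Fin m) (i : Fin k) :
    tdist (Sum.inr (Sum.inr s)) (Sum.inl i) = (i:ℕ) + 1 := by
  simp [tdist, br, dp]; omega

lemma tdist_pu (s : Fin m) (i : Fin k) :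
    tdist (Sum.inr (Sum.inr s)) (Sum.inr (Sum.inl i)) = (i:ℕ) + 2 := by
  simp [tdist, br, dp]; omega

lemma tdist_pp (s tt : Fin m) :
    tdist (k := k) (Sum.inr (Sum.inr s)) (Sum.inr (Sum.inr tt)) = if s = tt then 0 else 2 := by
  by_cases h : s = tt
  · simp [h, tdist_self]
  · have : ((s:ℕ)+2 : ℕ) ≠ (tt:ℕ)+2 := by
      simp only [ne_eq, Nat.add_right_cancel_iff, ← Fin.val_ne_iff] at *; exact h
    simp [tdist, br, dp, h, this]; exact fun hh => h (Fin.ext hh)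

end T1aux

namespace T1aux


lemma Dnonneg {k : ℕ} (hk : 0 < k) (ρ P : ℝ) (hρ : 0 < ρ) (hP : 0 < P) (D : Fin k → ℝ)
    (hF : ∀ j : Fin k, ρ * D j +
      ∑ i : Fin k, ((2 * min (i:ℕ) (j:ℕ) + 1 : ℕ) : ℝ) * D i = P) :
    ∀ j, 0 ≤ D j := by
  set g : ℕ → ℝ := fun n => ∑ i : Fin k, if n ≤ (i:ℕ) then D i else 0 with hg
  have hg_top : ∀ n, k ≤ n → g n = 0 := by
    intro n hn
    refine Finset.sum_eq_zero fun i _ => ?_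
    have : ¬ (n ≤ (i:ℕ)) := by have := i.isLt; omega
    simp [this]
  have hg_step : ∀ n (hn : n < k), g n = D ⟨n, hn⟩ + g (n+1) := by
    intro n hn
    have : g n = ∑ i : Fin k,
        ((if i = (⟨n, hn⟩ : Fin k) then D i else 0) + (if n + 1 ≤ (i:ℕ) then D i else 0)) := by
      refine Finset.sum_congr rfl fun i _ => ?_
      by_cases h1 : i = (⟨n, hn⟩ : Fin k)
      · subst h1; simp
      · have h2 : (i:ℕ) ≠ n := by
          intro hh; exact h1 (Fin.ext hh)
        by_cases h3 : n ≤ (i:ℕ)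
        · have h4 : n + 1 ≤ (i:ℕ) := by omega
          simp [h1, h3, h4]
        · have h4 : ¬ (n + 1 ≤ (i:ℕ)) := by omega
          simp [h1, h3, h4]
    rw [this, Finset.sum_add_distrib]
    congr 1
    simp
  have hG0 : ρ * D ⟨0, hk⟩ + g 0 = P := by
    have h := hF ⟨0, hk⟩
    have e : ∑ i : Fin k, ((2 * min (i:ℕ) ((⟨0, hk⟩ : Fin k):ℕ) + 1 : ℕ) : ℝ) * D i
        = g 0 := by
      refine Finset.sum_congr rfl fun i _ => ?_
      simp
    rw [e] at h; exact h
  have hGrec : ∀ n (h : n + 1 < k),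
      ρ * (D ⟨n+1, h⟩ - D ⟨n, Nat.lt_of_succ_lt h⟩) + 2 * g (n+1) = 0 := by
    intro n h
    have h1 := hF ⟨n+1, h⟩
    have h2 := hF ⟨n, Nat.lt_of_succ_lt h⟩
    have e : ∑ i : Fin k, ((2 * min (i:ℕ) (n+1) + 1 : ℕ) : ℝ) * D i
        - ∑ i : Fin k, ((2 * min (i:ℕ) n + 1 : ℕ) : ℝ) * D i
        = 2 * g (n+1) := by
      rw [← Finset.sum_sub_distrib, hg, Finset.mul_sum]
      refine Finset.sum_congr rfl fun i _ => ?_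
      by_cases hi : n + 1 ≤ (i:ℕ)
      · have e1 : min (i:ℕ) (n+1) = n+1 := by omega
        have e2 : min (i:ℕ) n = n := by omega
        simp only [e1, e2, if_pos hi]
        push_cast; ring
      · have e1 : min (i:ℕ) (n+1) = (i:ℕ) := by omega
        have e2 : min (i:ℕ) n = (i:ℕ) := by omega
        simp only [e1, e2, if_neg hi]
        push_cast; ring
    simp only [Fin.mk.injEq] at h1 h2 ⊢
    have h1' : ρ * D ⟨n+1, h⟩ + ∑ i : Fin k, ((2 * min (i:ℕ) (n+1) + 1 : ℕ) : ℝ) * D i = P := h1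
    have h2' : ρ * D ⟨n, Nat.lt_of_succ_lt h⟩ + ∑ i : Fin k, ((2 * min (i:ℕ) n + 1 : ℕ) : ℝ) * D i = P := h2
    linarith [e]
  have gnonneg : ∀ n, 0 ≤ g n := by
    obtain ⟨c, hc_mem, hc⟩ := Finset.exists_min_image (Finset.range (k+1)) g
      ⟨0, by simp⟩
    have hcle : c ≤ k := by
      have := Finset.mem_range.mp hc_mem; omega
    have hgc : 0 ≤ g c := by
      by_cases hck : c = k
      · rw [hck, hg_top k le_rfl]
      · have hck' : c < k := lt_of_le_of_ne hcle hck
        rcases Nat.eq_zero_or_pos c with hc0 | hc0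
        · subst hc0
          have e0 := hg_step 0 hk
          have hle : g 0 ≤ g 1 := hc 1 (Finset.mem_range.mpr (by omega))
          have hDneg : D ⟨0, hk⟩ ≤ 0 := by linarith
          nlinarith
        · obtain ⟨c', rfl⟩ : ∃ c', c = c' + 1 := ⟨c - 1, by omega⟩
          have hrec := hGrec c' hck'
          have e1 := hg_step (c'+1) hck'
          have e2 := hg_step c' (Nat.lt_of_succ_lt hck')
          have hle1 : g (c'+1) ≤ g c' := hc c' (Finset.mem_range.mpr (by omega))
          have hle2 : g (c'+1) ≤ g (c'+1+1) := hc (c'+1+1) (Finset.mem_range.mpr (by omega))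
          nlinarith
    intro n
    by_cases hn : n ≤ k
    · exact le_trans hgc (hc n (Finset.mem_range.mpr (by omega)))
    · rw [hg_top n (by omega)]
  have hlast : 0 ≤ D ⟨k-1, by omega⟩ := by
    have e := hg_step (k-1) (by omega)
    have e2 : g (k-1+1) = 0 := hg_top _ (by omega)
    rw [e2] at e
    have := gnonneg (k-1)
    linarith
  have claim : ∀ nn, ∀ j : Fin k, (j:ℕ) + nn = k - 1 → 0 ≤ D j := by
    intro nn
    induction nn with
    | zero =>
        intro j hj
        have : j = ⟨k-1, by omega⟩ := Fin.ext (by simpa using hj)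
        rw [this]; exact hlast
    | succ nn ih =>
        intro j hj
        have hjk : (j:ℕ) + 1 < k := by have := j.isLt; omega
        have hrec := hGrec (j:ℕ) hjk
        have hjeq : (⟨(j:ℕ), Nat.lt_of_succ_lt hjk⟩ : Fin k) = j := Fin.ext rfl
        rw [hjeq] at hrec
        have hnext : 0 ≤ D ⟨(j:ℕ)+1, hjk⟩ := ih ⟨(j:ℕ)+1, hjk⟩ (by simp; omega)
        have hgp := gnonneg ((j:ℕ)+1)
        nlinarith
  intro j
  exact claim (k - 1 - (j:ℕ)) j (by have := j.isLt; omega)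


lemma main {k m : ℕ} (hk : 2 ≤ k) (hm : 1 ≤ m) (ρ : ℝ)
    (X : Fin k ⊕ (Fin k ⊕ Fin m) → ℝ) (hpos : ∀ v, 0 < X v)
    (hrow : ∀ w0 : Fin k ⊕ (Fin k ⊕ Fin m),
      (∑ i : Fin k, (tdist w0 (Sum.inl i) : ℝ) * X (Sum.inl i)) +
      ((∑ i : Fin k, (tdist w0 (Sum.inr (Sum.inl i)) : ℝ) * X (Sum.inr (Sum.inl i))) +
       (∑ s : Fin m, (tdist w0 (Sum.inr (Sum.inr s)) : ℝ) * X (Sum.inr (Sum.inr s)))) =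
        ρ * X w0)
    (t : Fin m) :
    X (Sum.inr (Sum.inr t)) ≤ X (Sum.inl ⟨k-1, Nat.sub_lt (by omega) Nat.one_pos⟩) ∧
    (2 < k → X (Sum.inr (Sum.inr t)) < X (Sum.inl ⟨k-1, Nat.sub_lt (by omega) Nat.one_pos⟩)) := by
  -- abbreviations
  set κ : Fin k := ⟨k-1, by omega⟩ with hκ
  have h0k : 0 < k := by omega
  -- clean rows
  have hrowV : ∀ j : Fin k,
      (∑ i : Fin k, (Nat.dist (j:ℕ) (i:ℕ) : ℝ) * X (Sum.inl i)) +
      ((∑ i : Fin k, ((j:ℕ) + (i:ℕ) + 1 : ℝ) * X (Sum.inr (Sum.inl i))) +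
       (∑ s : Fin m, ((j:ℕ) + 1 : ℝ) * X (Sum.inr (Sum.inr s)))) = ρ * X (Sum.inl j) := by
    intro j
    have h := hrow (Sum.inl j)
    have e1 : ∑ i : Fin k, (tdist (m := m) (Sum.inl j) (Sum.inl i) : ℝ) * X (Sum.inl i)
        = ∑ i : Fin k, (Nat.dist (j:ℕ) (i:ℕ) : ℝ) * X (Sum.inl i) := by
      refine Finset.sum_congr rfl fun i _ => ?_; rw [tdist_ll]
    have e2 : ∑ i : Fin k, (tdist (m := m) (Sum.inl j) (Sum.inr (Sum.inl i)) : ℝ) * X (Sum.inr (Sum.inl i))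
        = ∑ i : Fin k, ((j:ℕ) + (i:ℕ) + 1 : ℝ) * X (Sum.inr (Sum.inl i)) := by
      refine Finset.sum_congr rfl fun i _ => ?_; rw [tdist_lu]; push_cast; ring
    have e3 : ∑ s : Fin m, (tdist (Sum.inl j) (Sum.inr (Sum.inr s)) : ℝ) * X (Sum.inr (Sum.inr s))
        = ∑ s : Fin m, ((j:ℕ) + 1 : ℝ) * X (Sum.inr (Sum.inr s)) := by
      refine Finset.sum_congr rfl fun s _ => ?_; rw [tdist_lp]; push_cast; ring
    rw [e1, e2, e3] at h; exact h
  have hrowU : ∀ j : Fin k,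
      (∑ i : Fin k, ((j:ℕ) + (i:ℕ) + 1 : ℝ) * X (Sum.inl i)) +
      ((∑ i : Fin k, (Nat.dist (j:ℕ) (i:ℕ) : ℝ) * X (Sum.inr (Sum.inl i))) +
       (∑ s : Fin m, ((j:ℕ) + 2 : ℝ) * X (Sum.inr (Sum.inr s)))) = ρ * X (Sum.inr (Sum.inl j)) := by
    intro j
    have h := hrow (Sum.inr (Sum.inl j))
    have e1 : ∑ i : Fin k, (tdist (m := m) (Sum.inr (Sum.inl j)) (Sum.inl i) : ℝ) * X (Sum.inl i)
        = ∑ i : Fin k, ((j:ℕ) + (i:ℕ) + 1 : ℝ) * X (Sum.inl i) := by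
      refine Finset.sum_congr rfl fun i _ => ?_; rw [tdist_ul]; push_cast; ring
    have e2 : ∑ i : Fin k, (tdist (m := m) (Sum.inr (Sum.inl j)) (Sum.inr (Sum.inl i)) : ℝ) * X (Sum.inr (Sum.inl i))
        = ∑ i : Fin k, (Nat.dist (j:ℕ) (i:ℕ) : ℝ) * X (Sum.inr (Sum.inl i)) := by
      refine Finset.sum_congr rfl fun i _ => ?_; rw [tdist_uu]
    have e3 : ∑ s : Fin m, (tdist (Sum.inr (Sum.inl j)) (Sum.inr (Sum.inr s)) : ℝ) * X (Sum.inr (Sum.inr s))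
        = ∑ s : Fin m, ((j:ℕ) + 2 : ℝ) * X (Sum.inr (Sum.inr s)) := by
      refine Finset.sum_congr rfl fun s _ => ?_; rw [tdist_up]; push_cast; ring
    rw [e1, e2, e3] at h; exact h
  have hrowP :
      (∑ i : Fin k, ((i:ℕ) + 1 : ℝ) * X (Sum.inl i)) +
      ((∑ i : Fin k, ((i:ℕ) + 2 : ℝ) * X (Sum.inr (Sum.inl i))) +
       (∑ s : Fin m, (if t = s then (0:ℝ) else 2) * X (Sum.inr (Sum.inr s)))) =
        ρ * X (Sum.inr (Sum.inr t)) := by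
    have h := hrow (Sum.inr (Sum.inr t))
    have e1 : ∑ i : Fin k, (tdist (Sum.inr (Sum.inr t)) (Sum.inl i) : ℝ) * X (Sum.inl i)
        = ∑ i : Fin k, ((i:ℕ) + 1 : ℝ) * X (Sum.inl i) := by
      refine Finset.sum_congr rfl fun i _ => ?_; rw [tdist_pl]; push_cast; ring
    have e2 : ∑ i : Fin k, (tdist (Sum.inr (Sum.inr t)) (Sum.inr (Sum.inl i)) : ℝ) * X (Sum.inr (Sum.inl i))
        = ∑ i : Fin k, ((i:ℕ) + 2 : ℝ) * X (Sum.inr (Sum.inl i)) := by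
      refine Finset.sum_congr rfl fun i _ => ?_; rw [tdist_pu]; push_cast; ring
    have e3 : ∑ s : Fin m, (tdist (k := k) (Sum.inr (Sum.inr t)) (Sum.inr (Sum.inr s)) : ℝ) * X (Sum.inr (Sum.inr s))
        = ∑ s : Fin m, (if t = s then (0:ℝ) else 2) * X (Sum.inr (Sum.inr s)) := by
      refine Finset.sum_congr rfl fun s _ => ?_; rw [tdist_pp]
      by_cases h' : t = s <;> simp [h']
    rw [e1, e2, e3] at h; exact h
  -- positivity of ρ
  have hρ : 0 < ρ := by
    have h1 : 0 < ∑ i : Fin k, ((i:ℕ) + 1 : ℝ) * X (Sum.inl i) := by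
      refine Finset.sum_pos (fun i _ => ?_) ⟨⟨0, h0k⟩, Finset.mem_univ _⟩
      exact mul_pos (by positivity) (hpos _)
    have h2 : 0 ≤ ∑ i : Fin k, ((i:ℕ) + 2 : ℝ) * X (Sum.inr (Sum.inl i)) := by
      refine Finset.sum_nonneg fun i _ => le_of_lt (mul_pos (by positivity) (hpos _))
    have h3 : 0 ≤ ∑ s : Fin m, (if t = s then (0:ℝ) else 2) * X (Sum.inr (Sum.inr s)) := by
      refine Finset.sum_nonneg fun s _ => ?_
      by_cases h' : t = s <;> simp [h'] <;> linarith [hpos (Sum.inr (Sum.inr s) : Fin k ⊕ (Fin k ⊕ Fin m))]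
    nlinarith [hpos (Sum.inr (Sum.inr t))]

  -- pendant sum positivity
  have hPpos : 0 < ∑ s : Fin m, X (Sum.inr (Sum.inr s)) :=
    Finset.sum_pos (fun s _ => hpos _) ⟨t, Finset.mem_univ t⟩
  -- the difference system along the two arms
  have hF : ∀ j : Fin k, ρ * (X (Sum.inr (Sum.inl j)) - X (Sum.inl j)) +
      ∑ i : Fin k, ((2 * min (i:ℕ) (j:ℕ) + 1 : ℕ) : ℝ) *
        (X (Sum.inr (Sum.inl i)) - X (Sum.inl i)) = ∑ s : Fin m, X (Sum.inr (Sum.inr s)) := by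
    intro j
    have hU := hrowU j
    have hV := hrowV j
    have key1 : ∀ i : Fin k, ((2 * min (i:ℕ) (j:ℕ) + 1 : ℕ) : ℝ)
        = ((j:ℕ) + (i:ℕ) + 1 : ℝ) - (Nat.dist (j:ℕ) (i:ℕ) : ℝ) := by
      intro i
      have hnat : Nat.dist (j:ℕ) (i:ℕ) + (2 * min (i:ℕ) (j:ℕ) + 1) = (j:ℕ) + (i:ℕ) + 1 := by
        simp [Nat.dist]; omega
      have hc := congrArg (fun x : ℕ => (x : ℝ)) hnat
      push_cast at hc ⊢
      linarith
    have hsum : ∑ i : Fin k, ((2 * min (i:ℕ) (j:ℕ) + 1 : ℕ) : ℝ) *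
          (X (Sum.inr (Sum.inl i)) - X (Sum.inl i))
        = (∑ i : Fin k, ((j:ℕ) + (i:ℕ) + 1 : ℝ) * X (Sum.inr (Sum.inl i))
            - ∑ i : Fin k, (Nat.dist (j:ℕ) (i:ℕ) : ℝ) * X (Sum.inr (Sum.inl i)))
          - (∑ i : Fin k, ((j:ℕ) + (i:ℕ) + 1 : ℝ) * X (Sum.inl i)
            - ∑ i : Fin k, (Nat.dist (j:ℕ) (i:ℕ) : ℝ) * X (Sum.inl i)) := by
      rw [← Finset.sum_sub_distrib, ← Finset.sum_sub_distrib, ← Finset.sum_sub_distrib]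
      refine Finset.sum_congr rfl fun i _ => ?_
      rw [key1 i]; ring
    have hpend : ∑ s : Fin m, ((j:ℕ) + 2 : ℝ) * X (Sum.inr (Sum.inr s))
        - ∑ s : Fin m, ((j:ℕ) + 1 : ℝ) * X (Sum.inr (Sum.inr s))
        = ∑ s : Fin m, X (Sum.inr (Sum.inr s)) := by
      rw [← Finset.sum_sub_distrib]
      refine Finset.sum_congr rfl fun s _ => ?_; ring
    linarith [hU, hV, hsum, hpend]
  have hD : ∀ i : Fin k, 0 ≤ X (Sum.inr (Sum.inl i)) - X (Sum.inl i) :=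
    Dnonneg h0k ρ _ hρ hPpos _ hF
  -- cast facts
  have hκv : ((κ:ℕ) : ℝ) = (k:ℝ) - 1 := by
    rw [hκ]
    simp only
    rw [Nat.cast_sub (by omega)]
    push_cast; ring
  have hkR : (2:ℝ) ≤ (k:ℝ) := by exact_mod_cast hk
  -- the main identity
  set P : ℝ := ∑ s : Fin m, X (Sum.inr (Sum.inr s)) with hPdef
  have hI : (ρ + k) * (X (Sum.inl κ) - X (Sum.inr (Sum.inr t)))
      = (∑ i : Fin k, (((k:ℝ) - 2*(i:ℕ) - 2) * X (Sum.inl i)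
          + ((k:ℝ) - 2) * X (Sum.inr (Sum.inl i))
          + (if i = κ then (k:ℝ) * X (Sum.inl κ) else 0)))
        + ((k:ℝ) - 2) * (P - X (Sum.inr (Sum.inr t))) := by
    have h1 := hrowV κ
    have h2 := hrowP
    have e1 : ∑ i : Fin k, (Nat.dist (κ:ℕ) (i:ℕ) : ℝ) * X (Sum.inl i)
        = ∑ i : Fin k, ((k:ℝ) - 1 - (i:ℕ)) * X (Sum.inl i) := by
      refine Finset.sum_congr rfl fun i _ => ?_
      have hi : (i:ℕ) ≤ k - 1 := by have := i.isLt; omega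
      have hd : Nat.dist (κ:ℕ) (i:ℕ) = k - 1 - (i:ℕ) := by
        simp [Nat.dist, hκ]; omega
      rw [hd, Nat.cast_sub hi, Nat.cast_sub (by omega)]
      push_cast; ring
    have e2 : ∑ i : Fin k, ((κ:ℕ) + (i:ℕ) + 1 : ℝ) * X (Sum.inr (Sum.inl i))
        = ∑ i : Fin k, ((k:ℝ) + (i:ℕ)) * X (Sum.inr (Sum.inl i)) := by
      refine Finset.sum_congr rfl fun i _ => ?_
      rw [hκv]; ring
    have e3 : ∑ s : Fin m, ((κ:ℕ) + 1 : ℝ) * X (Sum.inr (Sum.inr s)) = (k:ℝ) * P := by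
      rw [hPdef, Finset.mul_sum]
      refine Finset.sum_congr rfl fun s _ => ?_
      rw [hκv]; ring
    have e4 : ∑ s : Fin m, (if t = s then (0:ℝ) else 2) * X (Sum.inr (Sum.inr s))
        = 2 * P - 2 * X (Sum.inr (Sum.inr t)) := by
      have : ∀ s : Fin m, (if t = s then (0:ℝ) else 2) * X (Sum.inr (Sum.inr s))
          = 2 * X (Sum.inr (Sum.inr s)) - (if t = s then 2 * X (Sum.inr (Sum.inr s)) else 0) := by
        intro s; by_cases h' : t = s <;> simp [h']
      rw [Finset.sum_congr rfl fun s _ => this s, Finset.sum_sub_distrib,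
        Finset.sum_ite_eq Finset.univ t (fun s => 2 * X (Sum.inr (Sum.inr s)))]
      simp [hPdef, Finset.mul_sum]
    rw [e1, e2, e3] at h1
    rw [e4] at h2
    have eS : ∑ i : Fin k, (((k:ℝ) - 2*(i:ℕ) - 2) * X (Sum.inl i)
          + ((k:ℝ) - 2) * X (Sum.inr (Sum.inl i))
          + (if i = κ then (k:ℝ) * X (Sum.inl κ) else 0))
        = (∑ i : Fin k, ((k:ℝ) - 2*(i:ℕ) - 2) * X (Sum.inl i))
          + (∑ i : Fin k, ((k:ℝ) - 2) * X (Sum.inr (Sum.inl i)))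
          + (∑ i : Fin k, (if i = κ then (k:ℝ) * X (Sum.inl κ) else 0)) := by
      rw [Finset.sum_add_distrib, Finset.sum_add_distrib]
    have eA : ∑ i : Fin k, ((k:ℝ) - 2*(i:ℕ) - 2) * X (Sum.inl i)
        = ∑ i : Fin k, ((k:ℝ) - 1 - (i:ℕ)) * X (Sum.inl i)
          - ∑ i : Fin k, ((i:ℕ) + 1 : ℝ) * X (Sum.inl i) := by
      rw [← Finset.sum_sub_distrib]
      exact Finset.sum_congr rfl fun i _ => by ring
    have eB : ∑ i : Fin k, ((k:ℝ) - 2) * X (Sum.inr (Sum.inl i))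
        = ∑ i : Fin k, ((k:ℝ) + (i:ℕ)) * X (Sum.inr (Sum.inl i))
          - ∑ i : Fin k, ((i:ℕ) + 2 : ℝ) * X (Sum.inr (Sum.inl i)) := by
      rw [← Finset.sum_sub_distrib]
      exact Finset.sum_congr rfl fun i _ => by ring
    have eC : ∑ i : Fin k, (if i = κ then (k:ℝ) * X (Sum.inl κ) else 0)
        = (k:ℝ) * X (Sum.inl κ) := by simp
    linear_combination h2 - h1 - eS - eA - eB - eC
  -- lower bound for the sum
  have hsum_ge : (∑ i : Fin k, (((k:ℝ) - 2*(i:ℕ) - 2) * X (Sum.inl i)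
        + ((k:ℝ) - 2) * X (Sum.inr (Sum.inl i))
        + (if i = κ then (k:ℝ) * X (Sum.inl κ) else 0)))
      ≥ 2 * ((k:ℝ) - 2) * X (Sum.inl ⟨0, h0k⟩) := by
    have hbound : ∀ i ∈ Finset.univ, (if i = (⟨0, h0k⟩ : Fin k) then 2 * ((k:ℝ) - 2) * X (Sum.inl ⟨0, h0k⟩) else 0)
        ≤ ((k:ℝ) - 2*(i:ℕ) - 2) * X (Sum.inl i) + ((k:ℝ) - 2) * X (Sum.inr (Sum.inl i))
          + (if i = κ then (k:ℝ) * X (Sum.inl κ) else 0) := by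
      intro i _
      by_cases hiκ : i = κ
      · have hne : i ≠ ⟨0, h0k⟩ := by
          rw [hiκ, hκ]; intro hcon
          have := Fin.mk.injEq (k-1) (by omega) 0 h0k ▸ hcon
          simp [Fin.ext_iff] at hcon; omega
        have hiv : ((i:ℕ) : ℝ) = (k:ℝ) - 1 := by rw [hiκ]; exact hκv
        simp only [if_neg hne, if_pos hiκ]
        have hb := hpos (Sum.inr (Sum.inl i))
        have ha := hpos (Sum.inl κ)
        rw [hiκ] at *
        nlinarith
      · have hne2 : (i:ℕ) ≠ k - 1 := by
          intro hcon; exact hiκ (Fin.ext (by rw [hcon, hκ]))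
        have hile : (i:ℕ) ≤ k - 2 := by have := i.isLt; omega
        have hileR : ((i:ℕ) : ℝ) ≤ (k:ℝ) - 2 := by
          have h2' : (i:ℕ) + 2 ≤ k := by omega
          have := (Nat.cast_le (α := ℝ)).mpr h2'
          push_cast at this; linarith
        have hDi := hD i
        have hai := hpos (Sum.inl i)
        simp only [if_neg hiκ]
        by_cases hi0 : i = ⟨0, h0k⟩
        · subst hi0
          rw [if_pos rfl]
          have h00 : (((⟨0, h0k⟩ : Fin k) : ℕ) : ℝ) = 0 := by norm_num
          rw [h00]
          nlinarith
        · rw [if_neg hi0]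
          nlinarith
    have := Finset.sum_le_sum hbound
    rwa [Finset.sum_ite_eq' Finset.univ (⟨0, h0k⟩ : Fin k)
      (fun _ => 2 * ((k:ℝ) - 2) * X (Sum.inl ⟨0, h0k⟩)), if_pos (Finset.mem_univ _)] at this
  have hPge : X (Sum.inr (Sum.inr t)) ≤ P := by
    rw [hPdef]
    exact Finset.single_le_sum (f := fun s : Fin m => X (Sum.inr (Sum.inr s)))
      (fun s _ => le_of_lt (hpos _)) (Finset.mem_univ t)
  have hρk : 0 < ρ + (k:ℝ) := by linarith
  have ha0 := hpos (Sum.inl (⟨0, h0k⟩ : Fin k))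
  have hL : 2 * ((k:ℝ) - 2) * X (Sum.inl ⟨0, h0k⟩) ≤ (ρ + k) * (X (Sum.inl κ) - X (Sum.inr (Sum.inr t))) := by
    nlinarith
  constructor
  · nlinarith
  · intro h2k
    have h2kr : (2:ℝ) < (k:ℝ) := by exact_mod_cast h2k
    nlinarith


end T1aux

/-- In the tree `T₁`, the Perron entry at the far endpoint `v_k` of the shorter arm is at
least the entry at any pendant vertex attached at `v_1`; for `k > 2` the inequality is
strict. -/
theorem stmt14 (k m : ℕ) (hk : 2 ≤ k) (hm : 1 ≤ m)
    (X : (Fin k ⊕ (Fin k ⊕ Fin m)) → ℝ) (hX : IsDistPerronVector (treeT1 k m) X) :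
    ∀ j : Fin m,
      X (Sum.inl ⟨k - 1, by omega⟩) ≥ X (Sum.inr (Sum.inr j)) ∧
      (2 < k → X (Sum.inl ⟨k - 1, by omega⟩) > X (Sum.inr (Sum.inr j))) := by
  intro j
  have h0k : 0 < k := by omega
  obtain ⟨hpos, -, heig⟩ := hX
  set ρ := distSpectralRadius (treeT1 k m) with hρdef
  have hrow : ∀ w0 : Fin k ⊕ (Fin k ⊕ Fin m),
      (∑ i : Fin k, (T1aux.tdist w0 (Sum.inl i) : ℝ) * X (Sum.inl i)) +
      ((∑ i : Fin k, (T1aux.tdist w0 (Sum.inr (Sum.inl i)) : ℝ) * X (Sum.inr (Sum.inl i))) +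
       (∑ s : Fin m, (T1aux.tdist w0 (Sum.inr (Sum.inr s)) : ℝ) * X (Sum.inr (Sum.inr s)))) =
        ρ * X w0 := by
    intro w0
    have h := congrFun heig w0
    simp only [Matrix.mulVec, dotProduct, distMatrix, Pi.smul_apply,
      smul_eq_mul] at h
    rw [Fintype.sum_sum_type] at h
    rw [Fintype.sum_sum_type] at h
    have ed : ∀ a b2 : Fin k ⊕ (Fin k ⊕ Fin m),
        ((treeT1 k m).dist a b2 : ℕ) = T1aux.tdist a b2 := fun a b2 => T1aux.dist_eq h0k a b2
    simp only [ed] at h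
    exact h
  have hm' := T1aux.main hk hm ρ X hpos hrow j
  exact ⟨hm'.1, fun h2 => hm'.2 h2⟩
end
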